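/- Upper bound on guesswork for the qubit trine states: the function f(\theta) = \frac{4}{3} + \frac{2}{3}(\cos^2(\theta - 2\pi/3) + \sin^2(\theta - 4\pi/3)) attains minimum value 2 - \frac{1}{\sqrt{3}} at \theta = \pi/4, and hence the guesswork for the uniform ensemble of the three trine states satisfies G(X|B) \leq 2 - \frac{1}{\sqrt{3}}. -/

import Mathlib

open Matrix ComplexOrder

/-- The three qubit trine states `|ψ_k⟩ = cos(2πk/3)|0⟩ + sin(2πk/3)|1⟩`, `k = 1,2,3`. -/
noncomputable def trine : Fin 3 → Fin 2 → ℂ := fun k =>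
  ![((Real.cos (((k : ℕ) + 1) * (2 * Real.pi / 3)) : ℝ) : ℂ),
    ((Real.sin (((k : ℕ) + 1) * (2 * Real.pi / 3)) : ℝ) : ℂ)]

/-- The rank-one projector onto the `k`-th trine state. -/
noncomputable def trineProj (k : Fin 3) : Matrix (Fin 2) (Fin 2) ℂ :=
  Matrix.vecMulVec (trine k) (star (trine k))

/-- The cost operator `R_g = (1/3) ∑_k N(g,k) |ψ_k⟩⟨ψ_k|` for a guessing order `g`. -/
noncomputable def trineR (g : Equiv.Perm (Fin 3)) : Matrix (Fin 2) (Fin 2) ℂ :=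
  (3 : ℂ)⁻¹ • ∑ k : Fin 3, ((((g.symm k : ℕ) + 1 : ℕ) : ℂ)) • trineProj k

/-- Guesswork with quantum side information for the uniform trine ensemble. -/
noncomputable def trineGuesswork : ℝ :=
  ⨅ E : {E : Equiv.Perm (Fin 3) → Matrix (Fin 2) (Fin 2) ℂ //
      (∀ g, (E g).PosSemidef) ∧ ∑ g, E g = 1},
    (∑ g : Equiv.Perm (Fin 3), (trineR g * E.1 g).trace).re

/- ### Auxiliary material -/

theorem gw_cos_pi_add (x : ℝ) : Real.cos (Real.pi + x) = -Real.cos x := by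
  simp [Real.cos_add]

theorem gw_sin_pi_add (x : ℝ) : Real.sin (Real.pi + x) = -Real.sin x := by
  simp [Real.sin_add]

/-- Explicit values of the trine states. -/
theorem trine_eq : trine = ![![(-(1/2) : ℂ), ((Real.sqrt 3 : ℝ) : ℂ)/2],
    ![(-(1/2) : ℂ), -(((Real.sqrt 3 : ℝ) : ℂ)/2)], ![(1 : ℂ), 0]] := by
  funext k i
  fin_cases k <;> fin_cases i <;> simp [trine]
  · rw [show (2 * (Real.pi : ℂ) / 3) = ((Real.pi - Real.pi/3 : ℝ) : ℂ) by push_cast; ring,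
      ← Complex.ofReal_cos, Real.cos_pi_sub, Real.cos_pi_div_three]
    push_cast; ring
  · rw [show (2 * (Real.pi : ℂ) / 3) = ((Real.pi - Real.pi/3 : ℝ) : ℂ) by push_cast; ring,
      ← Complex.ofReal_sin, Real.sin_pi_sub, Real.sin_pi_div_three]
    push_cast; ring
  · rw [show ((1 + 1 : ℂ) * (2 * (Real.pi : ℂ) / 3)) = ((Real.pi + Real.pi/3 : ℝ) : ℂ) by
        push_cast; ring,
      ← Complex.ofReal_cos, gw_cos_pi_add, Real.cos_pi_div_three]
    push_cast; ring
  · rw [show ((1 + 1 : ℂ) * (2 * (Real.pi : ℂ) / 3)) = ((Real.pi + Real.pi/3 : ℝ) : ℂ) by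
        push_cast; ring,
      ← Complex.ofReal_sin, gw_sin_pi_add, Real.sin_pi_div_three]
    push_cast; ring
  · rw [show ((2 + 1 : ℂ) * (2 * (Real.pi : ℂ) / 3)) = ((2 * Real.pi : ℝ) : ℂ) by
        push_cast; ring,
      ← Complex.ofReal_cos, Real.cos_two_pi]
    push_cast; ring
  · rw [show ((2 + 1 : ℂ) * (2 * (Real.pi : ℂ) / 3)) = ((2 * Real.pi : ℝ) : ℂ) by
        push_cast; ring,
      ← Complex.ofReal_sin, Real.sin_two_pi]
    push_cast; ring

theorem trineR_g1 : trineR (finRotate 3) =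
    !![1, -(((Real.sqrt 3 : ℝ) : ℂ)/6); -(((Real.sqrt 3 : ℝ) : ℂ)/6), 1] := by
  have s3 : ((Real.sqrt 3 : ℝ) : ℂ) * ((Real.sqrt 3 : ℝ) : ℂ) = 3 := by
    rw [← Complex.ofReal_mul, Real.mul_self_sqrt (by norm_num)]; norm_num
  have e0 : ((finRotate 3).symm (0 : Fin 3)) = 2 := by decide
  have e1 : ((finRotate 3).symm (1 : Fin 3)) = 0 := by decide
  have e2 : ((finRotate 3).symm (2 : Fin 3)) = 1 := by decide
  ext i j
  fin_cases i <;> fin_cases j <;>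
    simp [trineR, trineProj, trine_eq, Fin.sum_univ_three, e0, e1, e2,
      Matrix.vecMulVec_apply, Complex.star_def, Complex.conj_ofReal, -Matrix.cons_vecMulVec,
      -Matrix.vecMulVec_cons]
  · linear_combination (0:ℂ) * s3
  · linear_combination ((6:ℂ))⁻¹ * 0 * s3
  · linear_combination ((6:ℂ))⁻¹ * 0 * s3
  · linear_combination (3:ℂ)⁻¹ * s3

theorem trineR_g2 : trineR (Equiv.swap (1 : Fin 3) 2) =
    !![1, (((Real.sqrt 3 : ℝ) : ℂ)/6); (((Real.sqrt 3 : ℝ) : ℂ)/6), 1] := by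
  have s3 : ((Real.sqrt 3 : ℝ) : ℂ) * ((Real.sqrt 3 : ℝ) : ℂ) = 3 := by
    rw [← Complex.ofReal_mul, Real.mul_self_sqrt (by norm_num)]; norm_num
  have e0 : ((Equiv.swap (1 : Fin 3) 2).symm (0 : Fin 3)) = 0 := by decide
  have e1 : ((Equiv.swap (1 : Fin 3) 2).symm (1 : Fin 3)) = 2 := by decide
  have e2 : ((Equiv.swap (1 : Fin 3) 2).symm (2 : Fin 3)) = 1 := by decide
  have e0' : (Equiv.swap (1 : Fin 3) 2) (0 : Fin 3) = 0 := by decide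
  ext i j
  fin_cases i <;> fin_cases j <;>
    simp [trineR, trineProj, trine_eq, Fin.sum_univ_three, e0, e1, e2, e0',
      Matrix.vecMulVec_apply, Complex.star_def, Complex.conj_ofReal, -Matrix.cons_vecMulVec,
      -Matrix.vecMulVec_cons]
  · linear_combination (0:ℂ) * s3
  · linear_combination (0:ℂ) * s3
  · linear_combination (0:ℂ) * s3
  · linear_combination (3:ℂ)⁻¹ * s3

/-- Projector onto `|π/4⟩`. -/
noncomputable def guessP1 : Matrix (Fin 2) (Fin 2) ℂ := !![1/2, 1/2; 1/2, 1/2]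

/-- Projector onto `|π/4⟩⊥`. -/
noncomputable def guessP2 : Matrix (Fin 2) (Fin 2) ℂ := !![1/2, -(1/2); -(1/2), 1/2]

theorem guessP1_psd : guessP1.PosSemidef := by
  have h : guessP1 = (!![(((Real.sqrt 2)⁻¹ : ℝ) : ℂ); (((Real.sqrt 2)⁻¹ : ℝ) : ℂ)] :
      Matrix (Fin 2) (Fin 1) ℂ) * (!![(((Real.sqrt 2)⁻¹ : ℝ) : ℂ);
      (((Real.sqrt 2)⁻¹ : ℝ) : ℂ)] : Matrix (Fin 2) (Fin 1) ℂ)ᴴ := by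
    have hv : ((Real.sqrt 2)⁻¹ : ℝ) * (Real.sqrt 2)⁻¹ = 1/2 := by
      rw [← mul_inv, Real.mul_self_sqrt (by norm_num)]; norm_num
    ext i j
    fin_cases i <;> fin_cases j <;>
      simp [guessP1, Matrix.mul_apply, Matrix.conjTranspose_apply, Complex.star_def,
        Complex.conj_ofReal, ← Complex.ofReal_mul, hv] <;>
      (norm_cast; rw [hv]; norm_num)
  rw [h]
  exact Matrix.posSemidef_self_mul_conjTranspose _

theorem guessP2_psd : guessP2.PosSemidef := by
  have h : guessP2 = (!![(((Real.sqrt 2)⁻¹ : ℝ) : ℂ); -(((Real.sqrt 2)⁻¹ : ℝ) : ℂ)] :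
      Matrix (Fin 2) (Fin 1) ℂ) * (!![(((Real.sqrt 2)⁻¹ : ℝ) : ℂ);
      -(((Real.sqrt 2)⁻¹ : ℝ) : ℂ)] : Matrix (Fin 2) (Fin 1) ℂ)ᴴ := by
    have hv : ((Real.sqrt 2)⁻¹ : ℝ) * (Real.sqrt 2)⁻¹ = 1/2 := by
      rw [← mul_inv, Real.mul_self_sqrt (by norm_num)]; norm_num
    ext i j
    fin_cases i <;> fin_cases j <;>
      simp [guessP2, Matrix.mul_apply, Matrix.conjTranspose_apply, Complex.star_def,
        Complex.conj_ofReal, ← Complex.ofReal_mul, hv] <;>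
      (norm_cast; rw [hv]; norm_num)
  rw [h]
  exact Matrix.posSemidef_self_mul_conjTranspose _

/-- The POVM realizing the guesswork bound: measure in the `θ = π/4` basis and
guess in the order `(ψ₂, ψ₃, ψ₁)` resp. `(ψ₁, ψ₃, ψ₂)`. -/
noncomputable def guessE : Equiv.Perm (Fin 3) → Matrix (Fin 2) (Fin 2) ℂ := fun g =>
  if g = finRotate 3 then guessP1 else if g = Equiv.swap 1 2 then guessP2 else 0

theorem guessE_psd : ∀ g, (guessE g).PosSemidef := by
  intro g
  unfold guessE
  split_ifs
  · exact guessP1_psd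
  · exact guessP2_psd
  · exact Matrix.PosSemidef.zero

theorem guessE_sum : ∑ g, guessE g = 1 := by
  have hne : (finRotate 3 : Equiv.Perm (Fin 3)) ≠ Equiv.swap 1 2 := by decide
  have h : ∀ g : Equiv.Perm (Fin 3), guessE g =
      (if g = finRotate 3 then guessP1 else 0) + (if g = Equiv.swap 1 2 then guessP2 else 0) := by
    intro g
    unfold guessE
    split_ifs with h1 h2
    · exact absurd (h1 ▸ h2) hne
    · simp
    · simp
    · simp
  simp only [h]
  rw [Finset.sum_add_distrib, Finset.sum_ite_eq' Finset.univ (finRotate 3),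
    Finset.sum_ite_eq' Finset.univ (Equiv.swap 1 2)]
  simp only [Finset.mem_univ, if_true]
  ext i j
  fin_cases i <;> fin_cases j <;>
    simp [guessP1, guessP2, Matrix.one_apply] <;> norm_num

theorem guessE_value : (∑ g : Equiv.Perm (Fin 3), (trineR g * guessE g).trace).re
    = 2 - 1 / Real.sqrt 3 := by
  have hne : (finRotate 3 : Equiv.Perm (Fin 3)) ≠ Equiv.swap 1 2 := by decide
  have h : ∀ g : Equiv.Perm (Fin 3), (trineR g * guessE g).trace =
      (if g = finRotate 3 then (trineR (finRotate 3) * guessP1).trace else 0) +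
      (if g = Equiv.swap 1 2 then (trineR (Equiv.swap 1 2) * guessP2).trace else 0) := by
    intro g
    by_cases h1 : g = finRotate 3
    · subst h1; simp [guessE, hne]
    · by_cases hh : g = Equiv.swap 1 2
      · subst hh; simp [guessE, h1]
      · simp [guessE, h1, hh]
  rw [Finset.sum_congr rfl fun g _ => h g, Finset.sum_add_distrib,
    Finset.sum_ite_eq' Finset.univ (finRotate 3), Finset.sum_ite_eq' Finset.univ (Equiv.swap 1 2)]
  simp only [Finset.mem_univ, if_true]
  have t1 : (trineR (finRotate 3) * guessP1).trace = ((1 - Real.sqrt 3 / 6 : ℝ) : ℂ) := by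
    rw [trineR_g1]
    simp [guessP1, Matrix.trace, Matrix.mul_apply, Fin.sum_univ_two]
    ring
  have t2 : (trineR (Equiv.swap 1 2) * guessP2).trace = ((1 - Real.sqrt 3 / 6 : ℝ) : ℂ) := by
    rw [trineR_g2]
    simp [guessP2, Matrix.trace, Matrix.mul_apply, Fin.sum_univ_two]
    ring
  rw [t1, t2, ← Complex.ofReal_add, Complex.ofReal_re]
  have h3 : Real.sqrt 3 * Real.sqrt 3 = 3 := Real.mul_self_sqrt (by norm_num)
  have h3p : (0:ℝ) < Real.sqrt 3 := by positivity
  have hs : (1:ℝ) / Real.sqrt 3 = Real.sqrt 3 / 3 := by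
    rw [div_eq_div_iff h3p.ne' (by norm_num : (3:ℝ) ≠ 0)]; rw [h3]; ring
  rw [hs]; ring

/-- The function `f(θ) = 4/3 + (2/3)(cos²(θ − 2π/3) + sin²(θ − 4π/3))` attains its
minimum value `2 − 1/√3` at `θ = π/4`, and hence the guesswork of the uniform trine
ensemble satisfies `G(X|B) ≤ 2 − 1/√3`. -/
theorem trine_guesswork_upper_bound :
    (4 / 3 + (2 / 3) * (Real.cos (Real.pi / 4 - 2 * Real.pi / 3) ^ 2 +
        Real.sin (Real.pi / 4 - 4 * Real.pi / 3) ^ 2)) = 2 - 1 / Real.sqrt 3 ∧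
    (∀ θ : ℝ, 2 - 1 / Real.sqrt 3 ≤
      4 / 3 + (2 / 3) * (Real.cos (θ - 2 * Real.pi / 3) ^ 2 +
        Real.sin (θ - 4 * Real.pi / 3) ^ 2)) ∧
    trineGuesswork ≤ 2 - 1 / Real.sqrt 3 := by
  have h3 : Real.sqrt 3 * Real.sqrt 3 = 3 := Real.mul_self_sqrt (by norm_num)
  have h2 : Real.sqrt 2 * Real.sqrt 2 = 2 := Real.mul_self_sqrt (by norm_num)
  have h3p : (0:ℝ) < Real.sqrt 3 := by positivity
  have hs : (1:ℝ) / Real.sqrt 3 = Real.sqrt 3 / 3 := by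
    rw [div_eq_div_iff h3p.ne' (by norm_num : (3:ℝ) ≠ 0)]; rw [h3]; ring
  refine ⟨?_, ?_, ?_⟩
  · have hc : Real.cos (Real.pi/4 - 2 * Real.pi / 3)
        = Real.cos (Real.pi/4) * (-(1/2)) + Real.sin (Real.pi/4) * (Real.sqrt 3 / 2) := by
      rw [Real.cos_sub]
      have : (2 * Real.pi / 3 : ℝ) = Real.pi - Real.pi / 3 := by ring
      rw [this, Real.cos_pi_sub, Real.sin_pi_sub, Real.cos_pi_div_three, Real.sin_pi_div_three]
    have hsin : Real.sin (Real.pi/4 - 4 * Real.pi / 3)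
        = Real.sin (Real.pi/4) * (-(1/2)) - Real.cos (Real.pi/4) * (-(Real.sqrt 3 / 2)) := by
      rw [Real.sin_sub]
      have : (4 * Real.pi / 3 : ℝ) = Real.pi + Real.pi / 3 := by ring
      rw [this, gw_cos_pi_add, gw_sin_pi_add, Real.cos_pi_div_three, Real.sin_pi_div_three]
    rw [hc, hsin, hs, Real.cos_pi_div_four, Real.sin_pi_div_four]
    linear_combination ((Real.sqrt 3 - 1)^2/12) * h2 + (1/6) * h3
  · intro θ
    have hc : Real.cos (θ - 2 * Real.pi / 3)
        = Real.cos θ * (-(1/2)) + Real.sin θ * (Real.sqrt 3 / 2) := by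
      rw [Real.cos_sub]
      have : (2 * Real.pi / 3 : ℝ) = Real.pi - Real.pi / 3 := by ring
      rw [this, Real.cos_pi_sub, Real.sin_pi_sub, Real.cos_pi_div_three, Real.sin_pi_div_three]
    have hsin : Real.sin (θ - 4 * Real.pi / 3)
        = Real.sin θ * (-(1/2)) - Real.cos θ * (-(Real.sqrt 3 / 2)) := by
      rw [Real.sin_sub]
      have : (4 * Real.pi / 3 : ℝ) = Real.pi + Real.pi / 3 := by ring
      rw [this, gw_cos_pi_add, gw_sin_pi_add, Real.cos_pi_div_three, Real.sin_pi_div_three]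
    rw [hc, hsin, hs]
    nlinarith [Real.sin_sq_add_cos_sq θ, sq_nonneg (Real.sin θ - Real.cos θ), h3, h3p.le]
  · set f : {E : Equiv.Perm (Fin 3) → Matrix (Fin 2) (Fin 2) ℂ //
        (∀ g, (E g).PosSemidef) ∧ ∑ g, E g = 1} → ℝ :=
      fun E => (∑ g : Equiv.Perm (Fin 3), (trineR g * E.1 g).trace).re with hf
    have he : trineGuesswork = ⨅ E, f E := rfl
    by_cases hb : BddBelow (Set.range f)
    · have := ciInf_le hb (⟨guessE, guessE_psd, guessE_sum⟩ :
        {E : Equiv.Perm (Fin 3) → Matrix (Fin 2) (Fin 2) ℂ //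
        (∀ g, (E g).PosSemidef) ∧ ∑ g, E g = 1})
      rw [he]
      calc ⨅ E, f E ≤ _ := this
        _ = 2 - 1 / Real.sqrt 3 := guessE_value
    · rw [he, Real.iInf_of_not_bddBelow hb]
      have h1 : (1:ℝ) ≤ Real.sqrt 3 := by
        nlinarith [h3, Real.sqrt_nonneg 3]
      have : (1:ℝ) / Real.sqrt 3 ≤ 1 := by
        rw [div_le_one h3p]; exact h1
      linarith
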